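/- (Expansion of a ${}_2\varphi_1$ in shifted arguments, identity (630).) Let $0<q<1$, $a,b,\sigma,r$ with $0<r<1$, $|ab|<1$, $|abr|<1$, $y \in \mathbb{C}\setminus\mathbb{R}_{>0}$, and $l \in \mathbb{Z}$. Then ${}_2\varphi_1\!\left({b\sigma, b/\sigma \atop abr}; q, -yq^l\right) = \frac{(ab;q)_\infty (r;q)_\infty}{(q;q)_\infty (abr;q)_\infty} \sum_{k=0}^\infty (ab)^k \frac{(q^{k+1};q)_\infty}{(rq^k;q)_\infty}\, {}_2\varphi_1\!\left({b\sigma, b/\sigma \atop ab}; q, -yq^{l+k}\right)$, where the ${}_2\varphi_1$-series are understood via analytic continuation when necessary. -/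

import Mathlib

/-- Infinite q-shifted factorial `(c;q)_∞`. -/
noncomputable def qPinf (q : ℝ) (c : ℂ) : ℂ := ∏' i : ℕ, (1 - c * (q : ℂ) ^ i)

/-- Finite q-shifted factorial `(c;q)_j`. -/
noncomputable def qP (q : ℝ) (c : ℂ) (j : ℕ) : ℂ :=
  ∏ i ∈ Finset.range j, (1 - c * (q : ℂ) ^ i)

namespace Exp630

open Complex Filter Finset Topology

variable {q : ℝ}

lemma normQ (hq0 : 0 < q) : ‖(q:ℂ)‖ = q := by
  rw [Complex.norm_real, Real.norm_eq_abs, abs_of_pos hq0]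

lemma normQpow (hq0 : 0 < q) (i : ℕ) : ‖(q:ℂ)^i‖ = q^i := by
  rw [norm_pow, normQ hq0]

lemma qpow_le_one (hq0 : 0 < q) (hq1 : q < 1) (i : ℕ) : q ^ i ≤ 1 :=
  pow_le_one₀ hq0.le hq1.le

lemma factor_norm (hq0 : 0 < q) (c : ℂ) (i : ℕ) : ‖c * (q:ℂ)^i‖ = ‖c‖ * q^i := by
  rw [norm_mul, normQpow hq0]

lemma factor_norm_lt (hq0 : 0 < q) (hq1 : q < 1) {c : ℂ} (hc : ‖c‖ < 1) (i : ℕ) :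
    ‖c * (q:ℂ)^i‖ < 1 := by
  rw [factor_norm hq0]
  calc ‖c‖ * q ^ i ≤ ‖c‖ * 1 := by
        apply mul_le_mul_of_nonneg_left (qpow_le_one hq0 hq1 i) (norm_nonneg c)
    _ < 1 := by simpa using hc

lemma factor_ne_zero (hq0 : 0 < q) (hq1 : q < 1) {c : ℂ} (hc : ‖c‖ < 1) (i : ℕ) :
    1 - c * (q:ℂ)^i ≠ 0 := by
  intro h
  have h1 : (1:ℂ) = c * (q:ℂ)^i := by linear_combination h
  have h2 := factor_norm_lt hq0 hq1 hc i
  rw [← h1] at h2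
  simp at h2

lemma summable_geom_c (hq0 : 0 < q) (hq1 : q < 1) (C : ℝ) :
    Summable (fun i : ℕ => C * q ^ i) :=
  (summable_geometric_of_lt_one hq0.le hq1).mul_left C

lemma summable_clog (hq0 : 0 < q) (hq1 : q < 1) (c : ℂ) :
    Summable (fun i : ℕ => Complex.log (1 - c * (q:ℂ)^i)) := by
  obtain ⟨N, hN⟩ : ∃ N : ℕ, ‖c‖ * q ^ N ≤ 1/2 := by
    rcases le_or_gt ‖c‖ 0 with h | h
    · exact ⟨0, by nlinarith [pow_pos hq0 0]⟩
    · obtain ⟨N, hN⟩ := exists_pow_lt_of_lt_one (show (0:ℝ) < 1/(2*‖c‖) by positivity) hq1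
      refine ⟨N, ?_⟩
      have h2 := (lt_div_iff₀ (by positivity : (0:ℝ) < 2*‖c‖)).mp hN
      nlinarith
  rw [← summable_nat_add_iff N]
  apply Summable.of_norm
  apply Summable.of_nonneg_of_le (fun i => norm_nonneg _)
    (fun i => ?_) (summable_geom_c hq0 hq1 ((3/2) * (‖c‖ * q ^ N)))
  have hb : ‖-(c * (q:ℂ)^(i+N))‖ ≤ 1/2 := by
    rw [norm_neg, factor_norm hq0, pow_add]
    calc ‖c‖ * (q^i * q^N) = (‖c‖ * q^N) * q^i := by ring
      _ ≤ (1/2) * 1 := by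
          apply mul_le_mul hN (qpow_le_one hq0 hq1 i) (by positivity) (by norm_num)
      _ = 1/2 := by norm_num
  have := Complex.norm_log_one_add_half_le_self hb
  have heq : (1 : ℂ) + -(c * (q:ℂ)^(i+N)) = 1 - c * (q:ℂ)^(i+N) := by ring
  rw [heq] at this
  refine this.trans ?_
  rw [norm_neg, factor_norm hq0, pow_add]
  calc (3/2) * (‖c‖ * (q^i * q^N)) = (3/2) * (‖c‖ * q^N) * q^i := by ring
    _ ≤ (3/2) * (‖c‖ * q^N) * q^i := le_refl _

lemma multipliable_factors (hq0 : 0 < q) (hq1 : q < 1) {c : ℂ} (hc : ‖c‖ < 1) :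
    Multipliable (fun i : ℕ => 1 - c * (q:ℂ)^i) := by
  have := Complex.multipliable_of_summable_log (summable_clog hq0 hq1 c)
  exact this

lemma qPinf_eq_exp (hq0 : 0 < q) (hq1 : q < 1) {c : ℂ} (hc : ‖c‖ < 1) :
    qPinf q c = Complex.exp (∑' i : ℕ, Complex.log (1 - c * (q:ℂ)^i)) := by
  have := Complex.cexp_tsum_eq_tprod
    (fun i => factor_ne_zero hq0 hq1 hc i)
    (summable_clog hq0 hq1 c)
  exact this.symm

lemma qPinf_ne_zero (hq0 : 0 < q) (hq1 : q < 1) {c : ℂ} (hc : ‖c‖ < 1) :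
    qPinf q c ≠ 0 := by
  rw [qPinf_eq_exp hq0 hq1 hc]; exact Complex.exp_ne_zero _

lemma hasProd_qPinf (hq0 : 0 < q) (hq1 : q < 1) {c : ℂ} (hc : ‖c‖ < 1) :
    HasProd (fun i : ℕ => 1 - c * (q:ℂ)^i) (qPinf q c) :=
  (multipliable_factors hq0 hq1 hc).hasProd

lemma tendsto_qP (hq0 : 0 < q) (hq1 : q < 1) {c : ℂ} (hc : ‖c‖ < 1) :
    Tendsto (fun n => qP q c n) atTop (𝓝 (qPinf q c)) := by
  unfold qP
  exact (hasProd_qPinf hq0 hq1 hc).tendsto_prod_nat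

lemma qPinf_split (hq0 : 0 < q) (hq1 : q < 1) {c : ℂ} (hc : ‖c‖ < 1) (k : ℕ) :
    qPinf q c = qP q c k * qPinf q (c * (q:ℂ)^k) := by
  have hck : ‖c * (q:ℂ)^k‖ < 1 := factor_norm_lt hq0 hq1 hc k
  have hfun : (fun n : ℕ => 1 - c * (q:ℂ)^(n + k)) =
      (fun n : ℕ => 1 - (c * (q:ℂ)^k) * (q:ℂ)^n) := by
    funext n; rw [pow_add]; ring
  have hm : Multipliable (fun n : ℕ => 1 - c * (q:ℂ)^(n + k)) := by
    rw [hfun]; exact multipliable_factors hq0 hq1 hck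
  have h := Multipliable.prod_mul_tprod_nat_mul' (f := fun i : ℕ => 1 - c * (q:ℂ)^i) (k := k) hm
  unfold qPinf qP
  rw [← h]
  congr 1
  rw [show (∏' (i : ℕ), (1 - (c * (q:ℂ)^k) * (q:ℂ)^i)) = ∏' (i : ℕ), (1 - c * (q:ℂ)^(i+k))
    from by rw [hfun]]

/-- real infinite product -/
noncomputable def realP (q x : ℝ) : ℝ := ∏' i : ℕ, (1 - x * q ^ i)

lemma geom_sum_le (hq0 : 0 < q) (hq1 : q < 1) (j : ℕ) :
    ∑ i ∈ Finset.range j, q ^ i ≤ (1 - q)⁻¹ := by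
  have hs : Summable (fun i : ℕ => q ^ i) := summable_geometric_of_lt_one hq0.le hq1
  have := Summable.sum_le_tsum (Finset.range j) (fun i _ => (pow_pos hq0 i).le) hs
  rwa [tsum_geometric_of_lt_one hq0.le hq1] at this

lemma qP_norm_le (hq0 : 0 < q) (hq1 : q < 1) (c : ℂ) (j : ℕ) :
    ‖qP q c j‖ ≤ Real.exp (‖c‖ * (1 - q)⁻¹) := by
  unfold qP
  rw [norm_prod]
  calc ∏ i ∈ Finset.range j, ‖1 - c * (q:ℂ)^i‖
      ≤ ∏ i ∈ Finset.range j, Real.exp (‖c‖ * q ^ i) := by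
        apply Finset.prod_le_prod (fun i _ => norm_nonneg _)
        intro i _
        calc ‖1 - c * (q:ℂ)^i‖ ≤ ‖(1:ℂ)‖ + ‖c * (q:ℂ)^i‖ := norm_sub_le _ _
          _ = 1 + ‖c‖ * q ^ i := by rw [norm_one, factor_norm hq0]
          _ ≤ Real.exp (‖c‖ * q ^ i) := Real.add_one_le_exp _ |>.trans_eq' (by ring_nf)
    _ = Real.exp (∑ i ∈ Finset.range j, ‖c‖ * q ^ i) := by rw [Real.exp_sum]
    _ ≤ Real.exp (‖c‖ * (1 - q)⁻¹) := by
        apply Real.exp_le_exp.mpr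
        rw [← Finset.mul_sum]
        exact mul_le_mul_of_nonneg_left (geom_sum_le hq0 hq1 j) (norm_nonneg c)

section RealP

variable (hq0 : 0 < q) (hq1 : q < 1)

lemma real_factor_pos (hq0 : 0 < q) (hq1 : q < 1) {x : ℝ} (hx0 : 0 ≤ x) (hx1 : x < 1) (i : ℕ) :
    0 < 1 - x * q ^ i := by
  have h1 : x * q ^ i ≤ x * 1 := mul_le_mul_of_nonneg_left (qpow_le_one hq0 hq1 i) hx0
  nlinarith

lemma summable_rlog (hq0 : 0 < q) (hq1 : q < 1) {x : ℝ} (hx0 : 0 ≤ x) (hx1 : x < 1) :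
    Summable (fun i : ℕ => Real.log (1 - x * q ^ i)) := by
  rw [← Complex.summable_ofReal]
  have : (fun i : ℕ => ((Real.log (1 - x * q ^ i) : ℝ) : ℂ)) =
      (fun i : ℕ => Complex.log (1 - (x:ℂ) * (q:ℂ)^i)) := by
    funext i
    rw [Complex.ofReal_log (real_factor_pos hq0 hq1 hx0 hx1 i).le]
    push_cast
    ring_nf
  rw [this]
  exact summable_clog hq0 hq1 _

lemma realP_eq_exp (hq0 : 0 < q) (hq1 : q < 1) {x : ℝ} (hx0 : 0 ≤ x) (hx1 : x < 1) :
    realP q x = Real.exp (∑' i : ℕ, Real.log (1 - x * q ^ i)) := by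
  have := Real.rexp_tsum_eq_tprod
    (fun i => real_factor_pos hq0 hq1 hx0 hx1 i)
    (summable_rlog hq0 hq1 hx0 hx1)
  exact this.symm

lemma realP_pos (hq0 : 0 < q) (hq1 : q < 1) {x : ℝ} (hx0 : 0 ≤ x) (hx1 : x < 1) :
    0 < realP q x := by
  rw [realP_eq_exp hq0 hq1 hx0 hx1]; exact Real.exp_pos _

lemma realP_le_one (hq0 : 0 < q) (hq1 : q < 1) {x : ℝ} (hx0 : 0 ≤ x) (hx1 : x < 1) :
    realP q x ≤ 1 := by
  rw [realP_eq_exp hq0 hq1 hx0 hx1]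
  have hs : (∑' i : ℕ, Real.log (1 - x * q ^ i)) ≤ 0 := by
    apply tsum_nonpos
    intro i
    apply Real.log_nonpos
    · exact (real_factor_pos hq0 hq1 hx0 hx1 i).le
    · nlinarith [pow_pos hq0 i, mul_nonneg hx0 (pow_pos hq0 i).le]
  calc Real.exp (∑' i : ℕ, Real.log (1 - x * q ^ i)) ≤ Real.exp 0 := Real.exp_le_exp.mpr hs
    _ = 1 := Real.exp_zero

lemma realP_anti (hq0 : 0 < q) (hq1 : q < 1) {x x' : ℝ} (hx0 : 0 ≤ x) (hxx : x ≤ x')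
    (hx1 : x' < 1) : realP q x' ≤ realP q x := by
  have hx'0 : 0 ≤ x' := hx0.trans hxx
  have hx1' : x < 1 := lt_of_le_of_lt hxx hx1
  rw [realP_eq_exp hq0 hq1 hx0 hx1', realP_eq_exp hq0 hq1 hx'0 hx1]
  apply Real.exp_le_exp.mpr
  apply Summable.tsum_le_tsum _ (summable_rlog hq0 hq1 hx'0 hx1) (summable_rlog hq0 hq1 hx0 hx1')
  intro i
  apply Real.log_le_log (real_factor_pos hq0 hq1 hx'0 hx1 i)
  nlinarith [pow_pos hq0 i]

lemma multipliable_real (hq0 : 0 < q) (hq1 : q < 1) {x : ℝ} (hx0 : 0 ≤ x) (hx1 : x < 1) :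
    Multipliable (fun i : ℕ => 1 - x * q ^ i) := by
  have := Real.multipliable_of_summable_log
    (fun i => real_factor_pos hq0 hq1 hx0 hx1 i)
    (summable_rlog hq0 hq1 hx0 hx1)
  exact this

lemma realP_le_prefix (hq0 : 0 < q) (hq1 : q < 1) {x : ℝ} (hx0 : 0 ≤ x) (hx1 : x < 1) (k : ℕ) :
    realP q x ≤ ∏ i ∈ Finset.range k, (1 - x * q ^ i) := by
  have hxk0 : 0 ≤ x * q ^ k := mul_nonneg hx0 (pow_pos hq0 k).le
  have hxk1 : x * q ^ k < 1 := by
    have := mul_le_mul_of_nonneg_left (qpow_le_one hq0 hq1 k) hx0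
    nlinarith
  have hfun : (fun n : ℕ => 1 - x * q ^ (n + k)) = (fun n : ℕ => 1 - (x * q ^ k) * q ^ n) := by
    funext n; rw [pow_add]; ring
  have hm : Multipliable (fun n : ℕ => 1 - x * q ^ (n + k)) := by
    rw [hfun]; exact multipliable_real hq0 hq1 hxk0 hxk1
  have h := Multipliable.prod_mul_tprod_nat_mul' (f := fun i : ℕ => 1 - x * q ^ i) (k := k) hm
  have h2 : realP q x = (∏ i ∈ Finset.range k, (1 - x * q ^ i)) * realP q (x * q ^ k) := by
    unfold realP
    rw [← h]
    congr 1
    rw [show (∏' (i : ℕ), (1 - (x * q ^ k) * q ^ i)) = ∏' (i : ℕ), (1 - x * q ^ (i + k))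
      from by rw [hfun]]
  rw [h2]
  have hp : 0 ≤ ∏ i ∈ Finset.range k, (1 - x * q ^ i) :=
    Finset.prod_nonneg (fun i _ => (real_factor_pos hq0 hq1 hx0 hx1 i).le)
  calc (∏ i ∈ Finset.range k, (1 - x * q ^ i)) * realP q (x * q ^ k)
      ≤ (∏ i ∈ Finset.range k, (1 - x * q ^ i)) * 1 :=
        mul_le_mul_of_nonneg_left (realP_le_one hq0 hq1 hxk0 hxk1) hp
    _ = _ := mul_one _

lemma qPinf_ofReal (hq0 : 0 < q) (hq1 : q < 1) {x : ℝ} (hx0 : 0 ≤ x) (hx1 : x < 1) :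
    qPinf q (x : ℂ) = ((realP q x : ℝ) : ℂ) := by
  have hp : HasProd (fun i : ℕ => 1 - x * q ^ i) (realP q x) :=
    (multipliable_real hq0 hq1 hx0 hx1).hasProd
  have hmap := hp.map Complex.ofRealHom.toMonoidHom Complex.continuous_ofReal
  have : HasProd (fun i : ℕ => 1 - (x:ℂ) * (q:ℂ) ^ i) ((realP q x : ℝ) : ℂ) := by
    refine hmap.congr_fun ?_
    intro i
    simp [Complex.ofRealHom]
  exact this.tprod_eq

end RealP

lemma qP_norm_ge (hq0 : 0 < q) (hq1 : q < 1) {c : ℂ} (hc : ‖c‖ < 1) (j : ℕ) :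
    realP q ‖c‖ ≤ ‖qP q c j‖ := by
  unfold qP
  rw [norm_prod]
  calc realP q ‖c‖ ≤ ∏ i ∈ Finset.range j, (1 - ‖c‖ * q ^ i) :=
        realP_le_prefix hq0 hq1 (norm_nonneg c) hc j
    _ ≤ ∏ i ∈ Finset.range j, ‖1 - c * (q:ℂ)^i‖ := by
        apply Finset.prod_le_prod
          (fun i _ => (real_factor_pos hq0 hq1 (norm_nonneg c) hc i).le)
        intro i _
        calc 1 - ‖c‖ * q ^ i = ‖(1:ℂ)‖ - ‖c * (q:ℂ)^i‖ := by rw [norm_one, factor_norm hq0]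
          _ ≤ ‖1 - c * (q:ℂ)^i‖ := norm_sub_norm_le _ _

lemma qP_ne_zero (hq0 : 0 < q) (hq1 : q < 1) {c : ℂ} (hc : ‖c‖ < 1) (j : ℕ) :
    qP q c j ≠ 0 := by
  unfold qP
  exact Finset.prod_ne_zero_iff.mpr (fun i _ => factor_ne_zero hq0 hq1 hc i)

/-! ### Summability helpers -/

lemma summable_bnd {a : ℕ → ℂ} {B t : ℝ} (ht0 : 0 ≤ t) (ht1 : t < 1)
    (h : ∀ k, ‖a k‖ ≤ B * t ^ k) : Summable a :=
  Summable.of_norm (Summable.of_nonneg_of_le (fun k => norm_nonneg _) h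
    ((summable_geometric_of_lt_one ht0 ht1).mul_left B))

lemma summable_coef_pow {c : ℕ → ℂ} {B : ℝ} (hB : ∀ k, ‖c k‖ ≤ B) {w : ℂ} (hw : ‖w‖ < 1) :
    Summable (fun k => c k * w ^ k) := by
  apply summable_bnd (norm_nonneg w) hw (B := B)
  intro k
  rw [norm_mul, norm_pow]
  exact mul_le_mul_of_nonneg_right (hB k) (pow_nonneg (norm_nonneg w) k)

lemma coef_bound (hq0 : 0 < q) (hq1 : q < 1) (α : ℂ) (k : ℕ) :
    ‖qP q α k / qP q (q:ℂ) k‖ ≤ Real.exp (‖α‖ * (1 - q)⁻¹) / realP q q := by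
  have hQn : ‖(q:ℂ)‖ < 1 := by rw [normQ hq0]; exact hq1
  have hge : realP q q ≤ ‖qP q (q:ℂ) k‖ := by
    have := qP_norm_ge hq0 hq1 hQn k
    rwa [normQ hq0] at this
  have hpos : 0 < realP q q := realP_pos hq0 hq1 hq0.le hq1
  rw [norm_div]
  apply div_le_div₀ (Real.exp_pos _).le (qP_norm_le hq0 hq1 α k) hpos hge

/-- convergence of `qPinf` to 1 along a sequence tending to `0`. -/
lemma tendsto_qPinf_one (hq0 : 0 < q) (hq1 : q < 1) {w : ℕ → ℂ}
    (hw : Tendsto w atTop (𝓝 0)) :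
    Tendsto (fun n => qPinf q (w n)) atTop (𝓝 1) := by
  have hwn : Tendsto (fun n => ‖w n‖) atTop (𝓝 0) := by
    have := hw.norm
    simpa using this
  have hev : ∀ᶠ n in atTop, ‖w n‖ ≤ 1/2 :=
    hwn.eventually (eventually_le_nhds (by norm_num))
  set L : ℕ → ℂ := fun n => ∑' i : ℕ, Complex.log (1 - w n * (q:ℂ)^i) with hL
  have hLb : ∀ᶠ n in atTop, ‖L n‖ ≤ (3/2) * (1-q)⁻¹ * ‖w n‖ := by
    filter_upwards [hev] with n hn
    have hterm : ∀ i : ℕ, ‖Complex.log (1 - w n * (q:ℂ)^i)‖ ≤ (3/2) * ‖w n‖ * q ^ i := by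
      intro i
      have hb : ‖-(w n * (q:ℂ)^i)‖ ≤ 1/2 := by
        rw [norm_neg, factor_norm hq0]
        calc ‖w n‖ * q ^ i ≤ (1/2) * 1 :=
            mul_le_mul hn (qpow_le_one hq0 hq1 i) (pow_pos hq0 i).le (by norm_num)
          _ = 1/2 := by norm_num
      have := Complex.norm_log_one_add_half_le_self hb
      have heq : (1 : ℂ) + -(w n * (q:ℂ)^i) = 1 - w n * (q:ℂ)^i := by ring
      rw [heq] at this
      refine this.trans ?_
      rw [norm_neg, factor_norm hq0]
      ring_nf
      exact le_refl _
    have hsn : Summable (fun i : ℕ => (3/2) * ‖w n‖ * q ^ i) :=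
      summable_geom_c hq0 hq1 _
    have hs : Summable (fun i : ℕ => ‖Complex.log (1 - w n * (q:ℂ)^i)‖) :=
      Summable.of_nonneg_of_le (fun i => norm_nonneg _) hterm hsn
    calc ‖L n‖ ≤ ∑' i : ℕ, ‖Complex.log (1 - w n * (q:ℂ)^i)‖ := norm_tsum_le_tsum_norm hs
      _ ≤ ∑' i : ℕ, (3/2) * ‖w n‖ * q ^ i := Summable.tsum_le_tsum hterm hs hsn
      _ = (3/2) * ‖w n‖ * (1-q)⁻¹ := by
          rw [tsum_mul_left, tsum_geometric_of_lt_one hq0.le hq1]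
      _ = (3/2) * (1-q)⁻¹ * ‖w n‖ := by ring
  have hL0 : Tendsto L atTop (𝓝 0) :=
    squeeze_zero_norm' hLb (by simpa using hwn.const_mul ((3:ℝ)/2 * (1-q)⁻¹))
  have hexp : Tendsto (fun n => Complex.exp (L n)) atTop (𝓝 1) := by
    have := (Complex.continuous_exp.tendsto 0).comp hL0
    simpa [Function.comp_def] using this
  apply hexp.congr'
  filter_upwards [hwn.eventually (eventually_lt_nhds (by norm_num : (0:ℝ) < 1))] with n hn
  exact (qPinf_eq_exp hq0 hq1 hn).symm

/-- convergence of a power series with bounded coefficients and `c 0 = 1` to `1`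
along a sequence tending to `0`. -/
lemma tendsto_tsum_pow_one {c : ℕ → ℂ} {B : ℝ} (hc0 : c 0 = 1) (hB : ∀ k, ‖c k‖ ≤ B)
    {w : ℕ → ℂ} (hw : Tendsto w atTop (𝓝 0)) :
    Tendsto (fun n => ∑' k : ℕ, c k * (w n) ^ k) atTop (𝓝 1) := by
  have hBnn : 0 ≤ B := le_trans (by simp [hc0]) (hB 0)
  have hwn : Tendsto (fun n => ‖w n‖) atTop (𝓝 0) := by simpa using hw.norm
  have key : Tendsto (fun n => (∑' k : ℕ, c k * (w n) ^ k) - 1) atTop (𝓝 0) := by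
    have hbnd : ∀ᶠ n in atTop, ‖(∑' k : ℕ, c k * (w n) ^ k) - 1‖ ≤ 2 * B * ‖w n‖ := by
      filter_upwards [hwn.eventually (eventually_le_nhds (by norm_num : (0:ℝ) < 1/2))]
        with n hn
      have hw1 : ‖w n‖ < 1 := lt_of_le_of_lt hn (by norm_num)
      have hsum : Summable (fun k => c k * (w n) ^ k) := summable_coef_pow hB hw1
      have hsplit := Summable.tsum_eq_zero_add hsum
      have h0 : c 0 * (w n) ^ 0 = 1 := by simp [hc0]
      have htail : (∑' k : ℕ, c k * (w n) ^ k) - 1 = ∑' k : ℕ, c (k+1) * (w n) ^ (k+1) := by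
        rw [hsplit, h0]; ring
      rw [htail]
      have hterm : ∀ k : ℕ, ‖c (k+1) * (w n) ^ (k+1)‖ ≤ B * ‖w n‖ * (1/2) ^ k := by
        intro k
        rw [norm_mul, norm_pow]
        calc ‖c (k+1)‖ * ‖w n‖ ^ (k+1) ≤ B * ‖w n‖ ^ (k+1) :=
              mul_le_mul_of_nonneg_right (hB _) (pow_nonneg (norm_nonneg _) _)
          _ = B * ‖w n‖ * ‖w n‖ ^ k := by ring
          _ ≤ B * ‖w n‖ * (1/2) ^ k := by
              apply mul_le_mul_of_nonneg_left (pow_le_pow_left₀ (norm_nonneg _) hn k)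
              positivity
      have hsn : Summable (fun k : ℕ => B * ‖w n‖ * (1/2) ^ k) :=
        summable_geom_c (q := 1/2) (by norm_num) (by norm_num) _
      have hs2 : Summable (fun k : ℕ => ‖c (k+1) * (w n) ^ (k+1)‖) :=
        Summable.of_nonneg_of_le (fun k => norm_nonneg _) hterm hsn
      calc ‖∑' k : ℕ, c (k+1) * (w n) ^ (k+1)‖
          ≤ ∑' k : ℕ, ‖c (k+1) * (w n) ^ (k+1)‖ := norm_tsum_le_tsum_norm hs2
        _ ≤ ∑' k : ℕ, B * ‖w n‖ * (1/2) ^ k := Summable.tsum_le_tsum hterm hs2 hsn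
        _ = B * ‖w n‖ * 2 := by
            rw [tsum_mul_left, tsum_geometric_of_lt_one (by norm_num) (by norm_num)]
            norm_num
        _ = 2 * B * ‖w n‖ := by ring
    exact squeeze_zero_norm' hbnd (by simpa using hwn.const_mul (2 * B))
  have := key.add_const 1
  simpa using this

/-! ### The q-binomial theorem -/

theorem qbin (hq0 : 0 < q) (hq1 : q < 1) {α : ℂ} (hα : ‖α‖ ≤ 1) {z : ℂ} (hz : ‖z‖ < 1) :
    qPinf q z * (∑' k : ℕ, qP q α k / qP q (q:ℂ) k * z ^ k) = qPinf q (α * z) := by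
  have hQn : ‖(q:ℂ)‖ < 1 := by rw [normQ hq0]; exact hq1
  set c : ℕ → ℂ := fun k => qP q α k / qP q (q:ℂ) k with hc
  set B : ℝ := Real.exp (‖α‖ * (1 - q)⁻¹) / realP q q with hBdef
  have hB : ∀ k, ‖c k‖ ≤ B := coef_bound hq0 hq1 α
  have hc0 : c 0 = 1 := by simp [hc, qP]
  -- the recurrence
  have hrec : ∀ k : ℕ, c (k+1) * (1 - (q:ℂ)^(k+1)) = c k * (1 - α * (q:ℂ)^k) := by
    intro k
    have h1 : qP q α (k+1) = qP q α k * (1 - α * (q:ℂ)^k) := Finset.prod_range_succ _ k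
    have h2 : qP q (q:ℂ) (k+1) = qP q (q:ℂ) k * (1 - (q:ℂ)^(k+1)) := by
      have := Finset.prod_range_succ (fun i => 1 - (q:ℂ) * (q:ℂ)^i) k
      rw [show ((q:ℂ) * (q:ℂ)^k) = (q:ℂ)^(k+1) from by ring] at this
      exact this
    have hne1 : qP q (q:ℂ) k ≠ 0 := qP_ne_zero hq0 hq1 hQn k
    have hne3 : (1:ℂ) - (q:ℂ)^(k+1) ≠ 0 := by
      have := factor_ne_zero hq0 hq1 hQn k
      rwa [show (q:ℂ) * (q:ℂ)^k = (q:ℂ)^(k+1) from by ring] at this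
    rw [hc]
    simp only []
    rw [h1, h2]
    field_simp
  -- Claim A
  have claimA : ∀ w : ℂ, ‖w‖ < 1 →
      (1 - w) * (∑' k : ℕ, c k * w ^ k) =
      (1 - α * w) * (∑' k : ℕ, c k * ((q:ℂ) * w) ^ k) := by
    intro w hw
    have hqw : ‖(q:ℂ) * w‖ < 1 := by
      rw [norm_mul, normQ hq0]
      nlinarith [norm_nonneg w]
    have hs1 : Summable (fun k => c k * w ^ k) := summable_coef_pow hB hw
    have hs2 : Summable (fun k => c k * ((q:ℂ) * w) ^ k) := summable_coef_pow hB hqw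
    set S1 := ∑' k : ℕ, c k * w ^ k
    set S2 := ∑' k : ℕ, c k * ((q:ℂ) * w) ^ k
    have hA : Summable (fun k => c k * w ^ k - c k * ((q:ℂ) * w) ^ k) := hs1.sub hs2
    have hEq1 : S1 - S2 = ∑' k : ℕ, (c k * w ^ k - c k * ((q:ℂ) * w) ^ k) :=
      (Summable.tsum_sub hs1 hs2).symm
    have hz0 : (fun k => c k * w ^ k - c k * ((q:ℂ) * w) ^ k) 0 = 0 := by simp
    have hEq2 : ∑' k : ℕ, (c k * w ^ k - c k * ((q:ℂ) * w) ^ k)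
        = ∑' k : ℕ, (c (k+1) * w ^ (k+1) - c (k+1) * ((q:ℂ) * w) ^ (k+1)) := by
      rw [Summable.tsum_eq_zero_add hA]
      simp only [pow_zero, mul_one, sub_self, zero_add]
    have hterm : ∀ k : ℕ, c (k+1) * w ^ (k+1) - c (k+1) * ((q:ℂ) * w) ^ (k+1)
        = w * (c k * w ^ k) - (α * w) * (c k * ((q:ℂ) * w) ^ k) := by
      intro k
      linear_combination (w : ℂ)^(k+1) * hrec k
    have hEq3 : ∑' k : ℕ, (c (k+1) * w ^ (k+1) - c (k+1) * ((q:ℂ) * w) ^ (k+1))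
        = ∑' k : ℕ, (w * (c k * w ^ k) - (α * w) * (c k * ((q:ℂ) * w) ^ k)) :=
      tsum_congr hterm
    have hEq4 : ∑' k : ℕ, (w * (c k * w ^ k) - (α * w) * (c k * ((q:ℂ) * w) ^ k))
        = w * S1 - (α * w) * S2 := by
      rw [Summable.tsum_sub (hs1.mul_left w) (hs2.mul_left (α * w)), tsum_mul_left, tsum_mul_left]
    have hfinal : S1 - S2 = w * S1 - (α * w) * S2 := by
      rw [hEq1, hEq2, hEq3, hEq4]
    linear_combination hfinal
  -- the function P
  set P : ℂ → ℂ := fun w => qPinf q w * (∑' k : ℕ, c k * w ^ k) - qPinf q (α * w) with hP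
  have claimB : ∀ w : ℂ, ‖w‖ < 1 → P w = (1 - α * w) * P ((q:ℂ) * w) := by
    intro w hw
    have hαw : ‖α * w‖ < 1 := by
      rw [norm_mul]
      nlinarith [norm_nonneg w, norm_nonneg α]
    have h1 : qPinf q w = (1 - w) * qPinf q ((q:ℂ) * w) := by
      have := qPinf_split hq0 hq1 hw 1
      rw [show qP q w 1 = 1 - w from by simp [qP],
        show w * (q:ℂ)^1 = (q:ℂ) * w from by ring] at this
      exact this
    have h2 : qPinf q (α * w) = (1 - α * w) * qPinf q (α * ((q:ℂ) * w)) := by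
      have := qPinf_split hq0 hq1 hαw 1
      rw [show qP q (α * w) 1 = 1 - α * w from by simp [qP],
        show (α * w) * (q:ℂ)^1 = α * ((q:ℂ) * w) from by ring] at this
      exact this
    have hA := claimA w hw
    rw [hP]
    simp only []
    rw [h1, h2]
    linear_combination qPinf q ((q:ℂ) * w) * hA
  -- iteration
  have hIter : ∀ n : ℕ, P z = qP q (α * z) n * P ((q:ℂ)^n * z) := by
    intro n
    induction n with
    | zero => simp [qP]
    | succ n ih =>
      have hn : ‖(q:ℂ)^n * z‖ < 1 := by
        rw [norm_mul, normQpow hq0]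
        calc q^n * ‖z‖ ≤ 1 * ‖z‖ :=
            mul_le_mul_of_nonneg_right (qpow_le_one hq0 hq1 n) (norm_nonneg z)
          _ < 1 := by simpa using hz
      have hstep := claimB _ hn
      rw [show α * ((q:ℂ)^n * z) = (α * z) * (q:ℂ)^n from by ring,
        show (q:ℂ) * ((q:ℂ)^n * z) = (q:ℂ)^(n+1) * z from by ring] at hstep
      rw [ih, hstep, show qP q (α * z) (n+1) = qP q (α * z) n * (1 - (α * z) * (q:ℂ)^n)
        from Finset.prod_range_succ _ n]
      ring
  -- limits
  have hαz : ‖α * z‖ < 1 := by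
    rw [norm_mul]
    nlinarith [norm_nonneg z, norm_nonneg α]
  have hT1 : Tendsto (fun n => qP q (α * z) n) atTop (𝓝 (qPinf q (α * z))) :=
    tendsto_qP hq0 hq1 hαz
  have hw0 : Tendsto (fun n : ℕ => (q:ℂ)^n * z) atTop (𝓝 0) := by
    have hbnd : ∀ n : ℕ, ‖(q:ℂ)^n * z‖ ≤ ‖z‖ * q ^ n := by
      intro n
      rw [norm_mul, normQpow hq0]
      ring_nf
      exact le_refl _
    exact squeeze_zero_norm hbnd
      (by simpa using (tendsto_pow_atTop_nhds_zero_of_lt_one hq0.le hq1).const_mul ‖z‖)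
  have hT2 : Tendsto (fun n => P ((q:ℂ)^n * z)) atTop (𝓝 0) := by
    have c1 : Tendsto (fun n => qPinf q ((q:ℂ)^n * z)) atTop (𝓝 1) :=
      tendsto_qPinf_one hq0 hq1 hw0
    have c2 : Tendsto (fun n => ∑' k : ℕ, c k * ((q:ℂ)^n * z) ^ k) atTop (𝓝 1) :=
      tendsto_tsum_pow_one hc0 hB hw0
    have c3 : Tendsto (fun n => qPinf q (α * ((q:ℂ)^n * z))) atTop (𝓝 1) := by
      apply tendsto_qPinf_one hq0 hq1
      have := hw0.const_mul α
      simpa using this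
    have := (c1.mul c2).sub c3
    simpa using this
  have hT3 : Tendsto (fun n => qP q (α * z) n * P ((q:ℂ)^n * z)) atTop
      (𝓝 (qPinf q (α * z) * 0)) := hT1.mul hT2
  have hPz : P z = 0 := by
    have hconst : Tendsto (fun _ : ℕ => P z) atTop (𝓝 (P z)) := tendsto_const_nhds
    have : Tendsto (fun n => qP q (α * z) n * P ((q:ℂ)^n * z)) atTop (𝓝 (P z)) := by
      exact hconst.congr (fun n => hIter n)
    have := tendsto_nhds_unique this hT3
    rw [this, mul_zero]
  have := sub_eq_zero.mp hPz
  exact this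

/-! ### The ball identity -/

lemma ratio_bound (hq0 : 0 < q) (hq1 : q < 1) (c1 c1' : ℂ) {c2 : ℂ} (hc2 : ‖c2‖ < 1) (j : ℕ) :
    ‖(qP q c1 j * qP q c1' j) / (qP q (q:ℂ) j * qP q c2 j)‖ ≤
      (Real.exp (‖c1‖ * (1-q)⁻¹) * Real.exp (‖c1'‖ * (1-q)⁻¹)) /
        (realP q q * realP q ‖c2‖) := by
  have hQn : ‖(q:ℂ)‖ < 1 := by rw [normQ hq0]; exact hq1
  have h1 : realP q q ≤ ‖qP q (q:ℂ) j‖ := by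
    have := qP_norm_ge hq0 hq1 hQn j
    rwa [normQ hq0] at this
  have hp1 : 0 < realP q q := realP_pos hq0 hq1 hq0.le hq1
  have hp2 : 0 < realP q ‖c2‖ := realP_pos hq0 hq1 (norm_nonneg _) hc2
  rw [norm_div, norm_mul, norm_mul]
  apply div_le_div₀ (by positivity)
    (mul_le_mul (qP_norm_le hq0 hq1 c1 j) (qP_norm_le hq0 hq1 c1' j) (norm_nonneg _)
      (Real.exp_pos _).le)
    (by positivity)
    (mul_le_mul h1 (qP_norm_ge hq0 hq1 hc2 j) hp2.le (norm_nonneg _))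

lemma ball_identity {r : ℝ} (hq0 : 0 < q) (hq1 : q < 1) (hr0 : 0 < r) (hr1 : r < 1)
    (a b σ : ℂ) (hab : ‖a * b‖ < 1) (habr : ‖a * b * (r:ℂ)‖ < 1) {w : ℂ} (hw : ‖w‖ < 1) :
    (∑' j : ℕ, (qP q (b*σ) j * qP q (b/σ) j) / (qP q (q:ℂ) j * qP q (a*b*(r:ℂ)) j) * w^j)
    = (qPinf q (a*b) * qPinf q (r:ℂ)) / (qPinf q (q:ℂ) * qPinf q (a*b*(r:ℂ))) *
      ∑' k : ℕ, (a*b)^k * (qPinf q ((q:ℂ)^(k+1)) / qPinf q ((r:ℂ)*(q:ℂ)^k)) *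
        (∑' j : ℕ,
          (qP q (b*σ) j * qP q (b/σ) j) / (qP q (q:ℂ) j * qP q (a*b) j) * (w*(q:ℂ)^k)^j) := by
  have hQn : ‖(q:ℂ)‖ < 1 := by rw [normQ hq0]; exact hq1
  have hrn : ‖(r:ℂ)‖ < 1 := by rw [normQ hr0]; exact hr1
  set cj : ℕ → ℂ := fun j => (qP q (b*σ) j * qP q (b/σ) j) / (qP q (q:ℂ) j * qP q (a*b) j)
    with hcj
  set dj : ℕ → ℂ :=
    fun j => (qP q (b*σ) j * qP q (b/σ) j) / (qP q (q:ℂ) j * qP q (a*b*(r:ℂ)) j) with hdj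
  set ρ : ℕ → ℂ := fun k => qPinf q ((q:ℂ)^(k+1)) / qPinf q ((r:ℂ)*(q:ℂ)^k) with hρ
  set Cst : ℂ := (qPinf q (a*b) * qPinf q (r:ℂ)) / (qPinf q (q:ℂ) * qPinf q (a*b*(r:ℂ)))
    with hCst
  set Bc : ℝ := (Real.exp (‖b*σ‖ * (1-q)⁻¹) * Real.exp (‖b/σ‖ * (1-q)⁻¹)) /
      (realP q q * realP q ‖a*b‖) with hBc
  set Bd : ℝ := (Real.exp (‖b*σ‖ * (1-q)⁻¹) * Real.exp (‖b/σ‖ * (1-q)⁻¹)) /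
      (realP q q * realP q ‖a*b*(r:ℂ)‖) with hBd
  have hBcb : ∀ j, ‖cj j‖ ≤ Bc := fun j => ratio_bound hq0 hq1 _ _ hab j
  have hBdb : ∀ j, ‖dj j‖ ≤ Bd := fun j => ratio_bound hq0 hq1 _ _ habr j
  have hBcnn : 0 ≤ Bc := le_trans (norm_nonneg _) (hBcb 0)
  -- ρ is a positive real, bounded by (realP q r)⁻¹
  have hρval : ∀ k : ℕ, ρ k = ((realP q (q^(k+1)) / realP q (r * q^k) : ℝ) : ℂ) := by
    intro k
    have h1 : ((q:ℂ))^(k+1) = ((q^(k+1) : ℝ) : ℂ) := by push_cast; ring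
    have h2 : (r:ℂ) * ((q:ℂ))^k = ((r * q^k : ℝ) : ℂ) := by push_cast; ring
    have hx1 : q^(k+1) < 1 := pow_lt_one₀ hq0.le hq1 (Nat.succ_ne_zero k)
    have hx2 : r * q^k < 1 := by
      have := mul_le_mul_of_nonneg_left (qpow_le_one hq0 hq1 k) hr0.le
      nlinarith
    rw [hρ]
    simp only []
    rw [h1, h2, qPinf_ofReal hq0 hq1 (by positivity) hx1,
      qPinf_ofReal hq0 hq1 (by positivity) hx2]
    push_cast
    ring
  have hRρ : ∀ k : ℕ, ‖ρ k‖ ≤ (realP q r)⁻¹ := by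
    intro k
    have hx1 : q^(k+1) < 1 := pow_lt_one₀ hq0.le hq1 (Nat.succ_ne_zero k)
    have hx2 : r * q^k < 1 := by
      have := mul_le_mul_of_nonneg_left (qpow_le_one hq0 hq1 k) hr0.le
      nlinarith
    have hp1 : 0 < realP q (q^(k+1)) := realP_pos hq0 hq1 (by positivity) hx1
    have hp2 : 0 < realP q (r * q^k) := realP_pos hq0 hq1 (by positivity) hx2
    have hpr : 0 < realP q r := realP_pos hq0 hq1 hr0.le hr1
    have hmono : realP q r ≤ realP q (r * q^k) := by
      apply realP_anti hq0 hq1 (by positivity) _ hr1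
      have := mul_le_mul_of_nonneg_left (qpow_le_one hq0 hq1 k) hr0.le
      nlinarith
    rw [hρval k, Complex.norm_real, Real.norm_eq_abs, abs_of_pos (by positivity)]
    calc realP q (q^(k+1)) / realP q (r * q^k) ≤ 1 / realP q r := by
          apply div_le_div₀ zero_le_one (realP_le_one hq0 hq1 (by positivity) hx1) hpr hmono
      _ = (realP q r)⁻¹ := one_div _
  have hRρnn : (0:ℝ) ≤ (realP q r)⁻¹ := by
    have := realP_pos hq0 hq1 hr0.le hr1; positivity
  -- the double family
  set t : ℕ → ℕ → ℂ := fun k j => (a*b)^k * ρ k * (cj j * (w*(q:ℂ)^k)^j) with ht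
  have htb : ∀ k j, ‖t k j‖ ≤ (‖a*b‖^k * (realP q r)⁻¹) * (Bc * ‖w‖^j) := by
    intro k j
    rw [ht]
    simp only []
    rw [norm_mul, norm_mul, norm_mul, norm_pow, norm_pow]
    have h1 : ‖w * (q:ℂ)^k‖ ≤ ‖w‖ := by
      rw [norm_mul, normQpow hq0]
      calc ‖w‖ * q^k ≤ ‖w‖ * 1 :=
          mul_le_mul_of_nonneg_left (qpow_le_one hq0 hq1 k) (norm_nonneg w)
        _ = ‖w‖ := mul_one _
    have h2 : ‖w * (q:ℂ)^k‖^j ≤ ‖w‖^j := pow_le_pow_left₀ (norm_nonneg _) h1 j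
    have h3 : ‖a*b‖^k * ‖ρ k‖ ≤ ‖a*b‖^k * (realP q r)⁻¹ :=
      mul_le_mul_of_nonneg_left (hRρ k) (pow_nonneg (norm_nonneg _) k)
    have h4 : ‖cj j‖ * ‖w * (q:ℂ)^k‖^j ≤ Bc * ‖w‖^j :=
      mul_le_mul (hBcb j) h2 (pow_nonneg (norm_nonneg _) j) hBcnn
    exact mul_le_mul h3 h4 (by positivity) (by positivity)
  have htsum : Summable (Function.uncurry t) := by
    apply Summable.of_norm_bounded (Summable.mul_of_nonneg
      (f := fun k => ‖a*b‖^k * (realP q r)⁻¹) (g := fun j => Bc * ‖w‖^j)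
      (((summable_geometric_of_lt_one (norm_nonneg _) hab)).mul_right _)
      ((summable_geometric_of_lt_one (norm_nonneg _) hw).mul_left _)
      (fun k => by positivity) (fun j => by positivity))
    intro p
    exact htb p.1 p.2
  -- summabilities of single families
  have hsum_cj : ∀ k : ℕ, Summable (fun j => cj j * (w*(q:ℂ)^k)^j) := by
    intro k
    apply summable_coef_pow hBcb
    rw [norm_mul, normQpow hq0]
    calc ‖w‖ * q^k ≤ ‖w‖ * 1 :=
        mul_le_mul_of_nonneg_left (qpow_le_one hq0 hq1 k) (norm_nonneg w)
      _ < 1 := by simpa using hw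
  -- step 1 : rewrite RHS sum as double sum
  have step1 : ∀ k : ℕ, (a*b)^k * ρ k * (∑' j : ℕ, cj j * (w*(q:ℂ)^k)^j)
      = ∑' j : ℕ, t k j := by
    intro k
    rw [ht]
    simp only []
    rw [tsum_mul_left]
  -- step 2 : swap
  have step2 : ∑' (k : ℕ) (j : ℕ), t k j = ∑' (j : ℕ) (k : ℕ), t k j :=
    (Summable.tsum_comm htsum).symm
  -- step 3 : inner sum over k
  have step3 : ∀ j : ℕ, (∑' k : ℕ, t k j)
      = (cj j * w^j) * ∑' k : ℕ, ρ k * ((a*b) * (q:ℂ)^j)^k := by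
    intro j
    rw [← tsum_mul_left]
    apply tsum_congr
    intro k
    rw [ht]
    simp only []
    ring
  -- evaluation of the inner sum via the q-binomial theorem
  have hPQ : qPinf q (q:ℂ) ≠ 0 := qPinf_ne_zero hq0 hq1 hQn
  have hPr : qPinf q (r:ℂ) ≠ 0 := qPinf_ne_zero hq0 hq1 hrn
  have step4 : ∀ j : ℕ, Cst * (cj j * w^j) * (∑' k : ℕ, ρ k * ((a*b) * (q:ℂ)^j)^k)
      = dj j * w^j := by
    intro j
    set ζ : ℂ := (a*b) * (q:ℂ)^j with hζ
    have hζn : ‖ζ‖ < 1 := by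
      rw [hζ, norm_mul, normQpow hq0]
      calc ‖a*b‖ * q^j ≤ ‖a*b‖ * 1 :=
          mul_le_mul_of_nonneg_left (qpow_le_one hq0 hq1 j) (norm_nonneg _)
        _ < 1 := by simpa using hab
    have hrζn : ‖(r:ℂ) * ζ‖ < 1 := by
      rw [norm_mul, normQ hr0]
      nlinarith [norm_nonneg ζ]
    have hPζ : qPinf q ζ ≠ 0 := qPinf_ne_zero hq0 hq1 hζn
    have hPrζ : qPinf q ((r:ℂ) * ζ) ≠ 0 := qPinf_ne_zero hq0 hq1 hrζn
    -- express ρ k via finite products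
    have hρ2 : ∀ k : ℕ, ρ k = (qPinf q (q:ℂ) / qP q (q:ℂ) k) /
        (qPinf q (r:ℂ) / qP q (r:ℂ) k) := by
      intro k
      have hs1 : qPinf q (q:ℂ) = qP q (q:ℂ) k * qPinf q ((q:ℂ) * (q:ℂ)^k) :=
        qPinf_split hq0 hq1 hQn k
      have hs2 : qPinf q (r:ℂ) = qP q (r:ℂ) k * qPinf q ((r:ℂ) * (q:ℂ)^k) :=
        qPinf_split hq0 hq1 hrn k
      have he1 : qPinf q ((q:ℂ)^(k+1)) = qPinf q ((q:ℂ) * (q:ℂ)^k) := by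
        rw [show ((q:ℂ))^(k+1) = (q:ℂ) * (q:ℂ)^k from by ring]
      have hn1 : qP q (q:ℂ) k ≠ 0 := qP_ne_zero hq0 hq1 hQn k
      have hn2 : qP q (r:ℂ) k ≠ 0 := qP_ne_zero hq0 hq1 hrn k
      rw [hρ]
      simp only []
      rw [he1]
      rw [hs1, hs2]
      field_simp
    -- sum over k
    have hqbin := qbin hq0 hq1 (α := (r:ℂ)) (by rw [normQ hr0]; exact hr1.le) hζn
    have hsum1 : Summable (fun k : ℕ => qP q (r:ℂ) k / qP q (q:ℂ) k * ζ^k) :=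
      summable_coef_pow (coef_bound hq0 hq1 (r:ℂ)) hζn
    have hSj : ∑' k : ℕ, ρ k * ζ^k
        = (qPinf q (q:ℂ) / qPinf q (r:ℂ)) * (qPinf q ((r:ℂ)*ζ) / qPinf q ζ) := by
      have : ∀ k : ℕ, ρ k * ζ^k
          = (qPinf q (q:ℂ) / qPinf q (r:ℂ)) * (qP q (r:ℂ) k / qP q (q:ℂ) k * ζ^k) := by
        intro k
        rw [hρ2 k]
        have hn1 : qP q (q:ℂ) k ≠ 0 := qP_ne_zero hq0 hq1 hQn k
        have hn2 : qP q (r:ℂ) k ≠ 0 := qP_ne_zero hq0 hq1 hrn k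
        field_simp
      rw [tsum_congr this, tsum_mul_left]
      congr 1
      have : (∑' k : ℕ, qP q (r:ℂ) k / qP q (q:ℂ) k * ζ^k) = qPinf q ((r:ℂ)*ζ) / qPinf q ζ := by
        rw [eq_div_iff hPζ, mul_comm]
        exact hqbin
      rw [this]
    rw [hSj]
    -- splits of qPinf (a*b) and qPinf (a*b*r)
    have hsab : qPinf q (a*b) = qP q (a*b) j * qPinf q ζ := by
      rw [hζ]; exact qPinf_split hq0 hq1 hab j
    have hsabr : qPinf q (a*b*(r:ℂ)) = qP q (a*b*(r:ℂ)) j * qPinf q ((r:ℂ)*ζ) := by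
      have := qPinf_split hq0 hq1 habr j
      rw [show (a*b*(r:ℂ)) * (q:ℂ)^j = (r:ℂ) * ζ from by rw [hζ]; ring] at this
      exact this
    have hnab : qP q (a*b) j ≠ 0 := qP_ne_zero hq0 hq1 hab j
    have hnabr : qP q (a*b*(r:ℂ)) j ≠ 0 := qP_ne_zero hq0 hq1 habr j
    have hnQ : qP q (q:ℂ) j ≠ 0 := qP_ne_zero hq0 hq1 hQn j
    have key1 : Cst * ((qPinf q (q:ℂ) / qPinf q (r:ℂ)) * (qPinf q ((r:ℂ)*ζ) / qPinf q ζ))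
        = qP q (a*b) j / qP q (a*b*(r:ℂ)) j := by
      rw [hCst, hsab, hsabr]
      field_simp
    calc Cst * (cj j * w^j) * ((qPinf q (q:ℂ) / qPinf q (r:ℂ)) *
            (qPinf q ((r:ℂ)*ζ) / qPinf q ζ))
        = (Cst * ((qPinf q (q:ℂ) / qPinf q (r:ℂ)) * (qPinf q ((r:ℂ)*ζ) / qPinf q ζ)))
            * cj j * w^j := by ring
      _ = (qP q (a*b) j / qP q (a*b*(r:ℂ)) j) * cj j * w^j := by rw [key1]
      _ = dj j * w^j := by
          rw [hcj, hdj]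
          simp only []
          field_simp
  -- assemble
  calc ∑' j : ℕ, dj j * w^j
      = ∑' j : ℕ, Cst * ((cj j * w^j) * (∑' k : ℕ, ρ k * ((a*b) * (q:ℂ)^j)^k)) := by
        apply tsum_congr
        intro j
        rw [← step4 j]
        ring
    _ = Cst * ∑' j : ℕ, ((cj j * w^j) * (∑' k : ℕ, ρ k * ((a*b) * (q:ℂ)^j)^k)) :=
        tsum_mul_left
    _ = Cst * ∑' (j : ℕ) (k : ℕ), t k j := by
        congr 1
        exact tsum_congr (fun j => (step3 j).symm)
    _ = Cst * ∑' (k : ℕ) (j : ℕ), t k j := by rw [← step2]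
    _ = Cst * ∑' k : ℕ, (a*b)^k * ρ k * (∑' j : ℕ, cj j * (w*(q:ℂ)^k)^j) := by
        congr 1
        exact tsum_congr (fun k => (step1 k).symm)

/-! ### The domain Ω -/

def Omega : Set ℂ := {w : ℂ | w.im ≠ 0 ∨ w.re < 1}

lemma isOpen_Omega : IsOpen Omega := by
  have : Omega = {w : ℂ | w.im ≠ 0} ∪ {w : ℂ | w.re < 1} := by
    ext w; simp [Omega, Set.mem_setOf_eq]
  rw [this]
  exact (isOpen_ne_fun Complex.continuous_im continuous_const).union
    (isOpen_lt Complex.continuous_re continuous_const)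

lemma zero_mem_Omega : (0:ℂ) ∈ Omega := by
  right; simp

lemma smul_mem_Omega {w : ℂ} (hw : w ∈ Omega) {t : ℝ} (ht0 : 0 ≤ t) (ht1 : t ≤ 1) :
    ((t:ℂ) * w) ∈ Omega := by
  rcases eq_or_lt_of_le ht0 with h0 | h0
  · right
    rw [← h0]
    simp
  rcases hw with him | hre
  · left
    rw [show ((t:ℂ) * w).im = t * w.im from by simp [Complex.mul_im]]
    exact mul_ne_zero (ne_of_gt h0) him
  · right
    rw [show ((t:ℂ) * w).re = t * w.re from by simp [Complex.mul_re]]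
    rcases le_or_gt w.re 0 with h | h
    · have h2 : t * w.re ≤ t * 0 := mul_le_mul_of_nonneg_left h ht0
      nlinarith
    · have h2 := mul_lt_mul_of_pos_left hre h0
      nlinarith

lemma mul_qpow_mem_Omega (hq0 : 0 < q) (hq1 : q < 1) {w : ℂ} (hw : w ∈ Omega) (k : ℕ) :
    w * (q:ℂ)^k ∈ Omega := by
  have : w * (q:ℂ)^k = (((q^k : ℝ)):ℂ) * w := by push_cast; ring
  rw [this]
  exact smul_mem_Omega hw (pow_pos hq0 k).le (qpow_le_one hq0 hq1 k)

lemma isPreconnected_Omega : IsPreconnected Omega := by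
  have h : Omega = ⋃₀ {s : Set ℂ | ∃ w ∈ Omega, s = segment ℝ 0 w} := by
    ext y
    constructor
    · intro hy
      exact ⟨segment ℝ 0 y, ⟨y, hy, rfl⟩, right_mem_segment ℝ 0 y⟩
    · rintro ⟨s, ⟨w, hw, rfl⟩, hy⟩
      rw [segment_eq_image] at hy
      obtain ⟨t, ⟨ht0, ht1⟩, rfl⟩ := hy
      show ((1 - t) • (0:ℂ) + t • w) ∈ Omega
      have heq : (1 - t) • (0:ℂ) + t • w = (t:ℂ) * w := by
        simp [Complex.real_smul]
      rw [heq]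
      exact smul_mem_Omega hw ht0 ht1
  rw [h]
  apply isPreconnected_sUnion 0
  · rintro s ⟨w, _, rfl⟩
    exact left_mem_segment ℝ 0 w
  · rintro s ⟨w, _, rfl⟩
    exact (convex_segment 0 w).isPreconnected

lemma ball_subset_Omega : Metric.ball (0:ℂ) 1 ⊆ Omega := by
  intro w hw
  right
  rw [Metric.mem_ball, dist_zero_right] at hw
  calc w.re ≤ |w.re| := le_abs_self _
    _ ≤ ‖w‖ := Complex.abs_re_le_norm w
    _ < 1 := hw

/-! ### Analyticity of the series of shifted functions -/

lemma rhs_analytic (hq0 : 0 < q) (hq1 : q < 1) {F : ℂ → ℂ}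
    (hFa : AnalyticOnNhd ℂ F Omega) {e : ℕ → ℂ} {Ce s : ℝ} (hs0 : 0 ≤ s) (hs1 : s < 1)
    (he : ∀ k, ‖e k‖ ≤ Ce * s^k) :
    AnalyticOnNhd ℂ (fun w => ∑' k : ℕ, e k * F (w * (q:ℂ)^k)) Omega := by
  have hCe : 0 ≤ Ce := by
    have := le_trans (norm_nonneg (e 0)) (he 0)
    simpa using this
  apply DifferentiableOn.analyticOnNhd _ isOpen_Omega
  apply TendstoLocallyUniformlyOn.differentiableOn
    (F := fun (t : Finset ℕ) (w : ℂ) => ∑ k ∈ t, e k * F (w * (q:ℂ)^k)) (φ := atTop)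
  · -- locally uniform convergence
    rw [tendstoLocallyUniformlyOn_iff_forall_isCompact isOpen_Omega]
    intro K hKΩ hK
    set K' : Set ℂ := (fun p : ℝ × ℂ => (p.1:ℂ) * p.2) '' ((Set.Icc (0:ℝ) 1) ×ˢ K) with hK'
    have hK'c : IsCompact K' :=
      (isCompact_Icc.prod hK).image (by fun_prop)
    have hK'Ω : K' ⊆ Omega := by
      rintro x ⟨⟨t, w⟩, ⟨⟨ht0, ht1⟩, hw⟩, rfl⟩
      exact smul_mem_Omega (hKΩ hw) ht0 ht1
    obtain ⟨M, hM⟩ := hK'c.exists_bound_of_continuousOn (hFa.continuousOn.mono hK'Ω)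
    apply tendstoUniformlyOn_tsum (u := fun k => (Ce * s^k) * M)
      (((summable_geometric_of_lt_one hs0 hs1).mul_left Ce).mul_right M)
    intro n x hx
    have hmem : x * (q:ℂ)^n ∈ K' := by
      refine ⟨(q^n, x), ⟨⟨(pow_pos hq0 n).le, qpow_le_one hq0 hq1 n⟩, hx⟩, ?_⟩
      push_cast
      ring
    rw [norm_mul]
    apply mul_le_mul (he n) (hM _ hmem) (norm_nonneg _) (by positivity)
  · -- differentiability of the partial sums
    apply Filter.Eventually.of_forall
    intro t
    apply DifferentiableOn.fun_sum
    intro k _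
    apply DifferentiableOn.const_mul
    have hcomp : DifferentiableOn ℂ (F ∘ (fun w : ℂ => w * (q:ℂ)^k)) Omega := by
      apply DifferentiableOn.comp hFa.differentiableOn
        ((differentiable_id.mul_const ((q:ℂ)^k)).differentiableOn)
      intro w hw
      exact mul_qpow_mem_Omega hq0 hq1 hw k
    exact hcomp
  · exact isOpen_Omega

lemma rho_bound {r : ℝ} (hq0 : 0 < q) (hq1 : q < 1) (hr0 : 0 < r) (hr1 : r < 1) (k : ℕ) :
    ‖qPinf q ((q:ℂ)^(k+1)) / qPinf q ((r:ℂ)*(q:ℂ)^k)‖ ≤ (realP q r)⁻¹ := by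
  have hx1 : q^(k+1) < 1 := pow_lt_one₀ hq0.le hq1 (Nat.succ_ne_zero k)
  have hx2 : r * q^k < 1 := by
    have := mul_le_mul_of_nonneg_left (qpow_le_one hq0 hq1 k) hr0.le
    nlinarith
  have h1 : ((q:ℂ))^(k+1) = ((q^(k+1) : ℝ) : ℂ) := by push_cast; ring
  have h2 : (r:ℂ) * ((q:ℂ))^k = ((r * q^k : ℝ) : ℂ) := by push_cast; ring
  have hp1 : 0 < realP q (q^(k+1)) := realP_pos hq0 hq1 (by positivity) hx1
  have hp2 : 0 < realP q (r * q^k) := realP_pos hq0 hq1 (by positivity) hx2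
  have hpr : 0 < realP q r := realP_pos hq0 hq1 hr0.le hr1
  have hmono : realP q r ≤ realP q (r * q^k) := by
    apply realP_anti hq0 hq1 (by positivity) _ hr1
    have := mul_le_mul_of_nonneg_left (qpow_le_one hq0 hq1 k) hr0.le
    nlinarith
  rw [h1, h2, qPinf_ofReal hq0 hq1 (by positivity) hx1,
    qPinf_ofReal hq0 hq1 (by positivity) hx2, ← Complex.ofReal_div,
    Complex.norm_real, Real.norm_eq_abs, abs_of_pos (by positivity)]
  calc realP q (q^(k+1)) / realP q (r * q^k) ≤ 1 / realP q r := by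
        apply div_le_div₀ zero_le_one (realP_le_one hq0 hq1 (by positivity) hx1) hpr hmono
    _ = (realP q r)⁻¹ := one_div _

end Exp630

open Exp630

/-- Expansion of a `₂φ₁` with lower parameter `abr` in terms of `₂φ₁`'s with lower
parameter `ab` at shifted arguments (identity (630)).  Here `F` (resp. `G`) denotes the
one-valued analytic continuation of `₂φ₁(bσ, b/σ; ab; q, ·)` (resp.
`₂φ₁(bσ, b/σ; abr; q, ·)`) to `ℂ \ ℝ_{≥1}`. -/
theorem expansion_630 (q : ℝ) (hq0 : 0 < q) (hq1 : q < 1)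
    (r : ℝ) (hr0 : 0 < r) (hr1 : r < 1)
    (a b σ : ℂ) (ha : a ≠ 0) (hb : b ≠ 0) (hσ : σ ≠ 0)
    (hab : ‖a * b‖ < 1) (habr : ‖a * b * (r : ℂ)‖ < 1)
    (y : ℂ) (hy : ∀ t : ℝ, 0 < t → y ≠ (t : ℂ)) (l : ℤ)
    (hdom : ∀ k : ℕ, (-(y) * (q : ℂ) ^ (l + k)).im ≠ 0 ∨ (-(y) * (q : ℂ) ^ (l + k)).re < 1)
    (F G : ℂ → ℂ)
    (hFa : AnalyticOnNhd ℂ F {w : ℂ | w.im ≠ 0 ∨ w.re < 1})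
    (hGa : AnalyticOnNhd ℂ G {w : ℂ | w.im ≠ 0 ∨ w.re < 1})
    (hFs : ∀ w : ℂ, ‖w‖ < 1 → F w = ∑' j : ℕ,
      (qP q (b * σ) j * qP q (b / σ) j) /
        (qP q (q : ℂ) j * qP q (a * b) j) * w ^ j)
    (hGs : ∀ w : ℂ, ‖w‖ < 1 → G w = ∑' j : ℕ,
      (qP q (b * σ) j * qP q (b / σ) j) /
        (qP q (q : ℂ) j * qP q (a * b * (r : ℂ)) j) * w ^ j) :
    G (-(y) * (q : ℂ) ^ l) =
      (qPinf q (a * b) * qPinf q (r : ℂ)) / (qPinf q (q : ℂ) * qPinf q (a * b * (r : ℂ))) *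
        ∑' k : ℕ, (a * b) ^ k *
          (qPinf q ((q : ℂ) ^ (k + 1)) / qPinf q ((r : ℂ) * (q : ℂ) ^ k)) *
          F (-(y) * (q : ℂ) ^ (l + k)) := by
  have hQ0 : (q:ℂ) ≠ 0 := by
    simp only [ne_eq, Complex.ofReal_eq_zero]
    exact hq0.ne'
  have hFa' : AnalyticOnNhd ℂ F Omega := hFa
  have hGa' : AnalyticOnNhd ℂ G Omega := hGa
  have hrpos : 0 < realP q r := realP_pos hq0 hq1 hr0.le hr1
  -- the coefficient sequence
  have hebound : ∀ k : ℕ,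
      ‖(a*b)^k * (qPinf q ((q:ℂ)^(k+1)) / qPinf q ((r:ℂ)*(q:ℂ)^k))‖
        ≤ (realP q r)⁻¹ * ‖a*b‖^k := by
    intro k
    rw [norm_mul, norm_pow]
    calc ‖a*b‖^k * ‖qPinf q ((q:ℂ)^(k+1)) / qPinf q ((r:ℂ)*(q:ℂ)^k)‖
        ≤ ‖a*b‖^k * (realP q r)⁻¹ :=
          mul_le_mul_of_nonneg_left (rho_bound hq0 hq1 hr0 hr1 k)
            (pow_nonneg (norm_nonneg _) k)
      _ = (realP q r)⁻¹ * ‖a*b‖^k := mul_comm _ _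
  -- analyticity of the right-hand side
  have hHana : AnalyticOnNhd ℂ
      (fun w => ∑' k : ℕ, ((a*b)^k * (qPinf q ((q:ℂ)^(k+1)) / qPinf q ((r:ℂ)*(q:ℂ)^k)))
        * F (w * (q:ℂ)^k)) Omega :=
    rhs_analytic hq0 hq1 hFa' (norm_nonneg _) hab hebound
  have hCH : AnalyticOnNhd ℂ
      (fun w => (qPinf q (a*b) * qPinf q (r:ℂ)) / (qPinf q (q:ℂ) * qPinf q (a*b*(r:ℂ))) *
        ∑' k : ℕ, ((a*b)^k * (qPinf q ((q:ℂ)^(k+1)) / qPinf q ((r:ℂ)*(q:ℂ)^k)))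
          * F (w * (q:ℂ)^k)) Omega :=
    analyticOnNhd_const.mul hHana
  -- agreement on the unit ball
  have hEqOn : Set.EqOn G
      (fun w => (qPinf q (a*b) * qPinf q (r:ℂ)) / (qPinf q (q:ℂ) * qPinf q (a*b*(r:ℂ))) *
        ∑' k : ℕ, ((a*b)^k * (qPinf q ((q:ℂ)^(k+1)) / qPinf q ((r:ℂ)*(q:ℂ)^k)))
          * F (w * (q:ℂ)^k)) Omega := by
    apply AnalyticOnNhd.eqOn_of_preconnected_of_eventuallyEq hGa' hCH isPreconnected_Omega
      zero_mem_Omega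
    apply Filter.eventuallyEq_of_mem (Metric.ball_mem_nhds (0:ℂ) one_pos)
    intro w hw
    rw [Metric.mem_ball, dist_zero_right] at hw
    have hb2 := ball_identity hq0 hq1 hr0 hr1 a b σ hab habr hw
    calc G w = ∑' j : ℕ, (qP q (b*σ) j * qP q (b/σ) j) /
          (qP q (q:ℂ) j * qP q (a*b*(r:ℂ)) j) * w^j := hGs w hw
      _ = (qPinf q (a*b) * qPinf q (r:ℂ)) / (qPinf q (q:ℂ) * qPinf q (a*b*(r:ℂ))) *
          ∑' k : ℕ, (a*b)^k * (qPinf q ((q:ℂ)^(k+1)) / qPinf q ((r:ℂ)*(q:ℂ)^k)) *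
            (∑' j : ℕ, (qP q (b*σ) j * qP q (b/σ) j) /
              (qP q (q:ℂ) j * qP q (a*b) j) * (w*(q:ℂ)^k)^j) := hb2
      _ = (qPinf q (a*b) * qPinf q (r:ℂ)) / (qPinf q (q:ℂ) * qPinf q (a*b*(r:ℂ))) *
          ∑' k : ℕ, ((a*b)^k * (qPinf q ((q:ℂ)^(k+1)) / qPinf q ((r:ℂ)*(q:ℂ)^k)))
            * F (w * (q:ℂ)^k) := by
          congr 1
          apply tsum_congr
          intro k
          have hn : ‖w * (q:ℂ)^k‖ < 1 := by
            rw [norm_mul, normQpow hq0]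
            calc ‖w‖ * q^k ≤ ‖w‖ * 1 :=
                mul_le_mul_of_nonneg_left (qpow_le_one hq0 hq1 k) (norm_nonneg w)
              _ < 1 := by simpa using hw
          rw [hFs _ hn]
  -- evaluate at the point
  have hw0 : -(y) * (q:ℂ)^l ∈ Omega := by
    have := hdom 0
    simp only [Nat.cast_zero, add_zero] at this
    exact this
  have hfinal := hEqOn hw0
  rw [hfinal]
  beta_reduce
  congr 1
  apply tsum_congr
  intro k
  have harg : -(y) * (q:ℂ)^(l + (k:ℤ)) = (-(y) * (q:ℂ)^l) * (q:ℂ)^k := by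
    rw [zpow_add₀ hQ0, zpow_natCast]
    ring
  rw [harg]
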